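/- Let (R,m) be a one-dimensional Cohen–Macaulay local ring of minimal multiplicity (so m is stable: m² = xm for some nonzerodivisor x) and let J be a regular ideal with principal reduction (y). Then (y):J ⊇ m if and only if tr(J) ⊇ m. (Consequently, for J a canonical ideal, R is almost Gorenstein if and only if R is nearly Gorenstein.) -/

import Mathlib

open nonZeroDivisors IsLocalRing

/-- The trace ideal of an `R`-module `M`. -/
noncomputable def traceIdeal (R : Type*) [CommRing R] (M : Type*) [AddCommGroup M]
    [Module R M] : Ideal R :=
  ⨆ f : M →ₗ[R] R, LinearMap.range f

section Aux

variable {R : Type*} [CommRing R]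

lemma span_singleton_mul_cancel {r : R} (hr : r ∈ R⁰) {A B : Ideal R}
    (h : Ideal.span {r} * A = Ideal.span {r} * B) : A = B := by
  have key : ∀ {A B : Ideal R}, Ideal.span {r} * A = Ideal.span {r} * B → A ≤ B := by
    intro A B h a ha
    have hmem : r * a ∈ Ideal.span {r} * B := by
      rw [← h]
      exact Ideal.mul_mem_mul (Ideal.mem_span_singleton_self r) ha
    obtain ⟨b, hb, hrb⟩ := Ideal.mem_span_singleton_mul.mp hmem
    have : b = a := (mul_cancel_left_mem_nonZeroDivisors hr).mp hrb
    rwa [← this]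
  exact le_antisymm (key h) (key h.symm)

lemma span_mul_traceIdeal (J : Ideal R) (y : R) (hyJ : y ∈ J) (hy : y ∈ R⁰) :
    Ideal.span {y} * traceIdeal R J = (Ideal.span {y}).colon J * J := by
  set I := (Ideal.span {y}).colon J with hIdef
  have hmul : ∀ (f : J →ₗ[R] R) (a : J), y * f a = a.1 * f ⟨y, hyJ⟩ := by
    intro f a
    have hsub : (y • a : J) = a.1 • (⟨y, hyJ⟩ : J) := by
      apply Subtype.ext
      simp [mul_comm]
    calc y * f a = y • f a := rfl
      _ = f (y • a) := (map_smul f y a).symm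
      _ = f (a.1 • ⟨y, hyJ⟩) := by rw [hsub]
      _ = a.1 • f ⟨y, hyJ⟩ := map_smul f a.1 _
      _ = a.1 * f ⟨y, hyJ⟩ := rfl
  have hfy : ∀ f : J →ₗ[R] R, f ⟨y, hyJ⟩ ∈ I := by
    intro f
    rw [hIdef, Submodule.mem_colon]
    intro j hj
    rw [smul_eq_mul, Ideal.mem_span_singleton']
    refine ⟨f ⟨j, hj⟩, ?_⟩
    have := hmul f ⟨j, hj⟩
    rw [mul_comm] at this
    rw [this, mul_comm]
  apply le_antisymm
  · refine Ideal.mul_le.mpr fun r hr t ht => ?_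
    obtain ⟨c, rfl⟩ := Ideal.mem_span_singleton'.mp hr
    have hle : traceIdeal R J ≤ (I * J).colon (Ideal.span {y}) := by
      refine iSup_le fun f => ?_
      rintro t ⟨a, rfl⟩
      rw [Submodule.mem_colon]
      intro p hp
      obtain ⟨d, rfl⟩ := Ideal.mem_span_singleton'.mp hp
      rw [smul_eq_mul]
      have heq : f a * (d * y) = d * (a.1 * f ⟨y, hyJ⟩) := by
        rw [← hmul f a]; ring
      rw [heq]
      refine Ideal.mul_mem_left _ d ?_
      have hc : (a.1 : R) * f ⟨y, hyJ⟩ = f ⟨y, hyJ⟩ * a.1 := mul_comm _ _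
      rw [hc]
      exact Ideal.mul_mem_mul (hfy f) a.2
    have ht' := Submodule.mem_colon.mp (hle ht) y (Ideal.mem_span_singleton_self y)
    rw [smul_eq_mul] at ht'
    have : c * y * t = c * (t * y) := by ring
    rw [this]
    exact Ideal.mul_mem_left _ c ht'
  · refine Ideal.mul_le.mpr fun a ha j hj => ?_
    have hex : ∀ j : J, ∃ c, y * c = a * j.1 := by
      intro j
      have := Submodule.mem_colon.mp ha j.1 j.2
      rw [smul_eq_mul, Ideal.mem_span_singleton'] at this
      obtain ⟨c, hc⟩ := this
      exact ⟨c, by rw [mul_comm]; exact hc⟩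
    let f : J →ₗ[R] R :=
      { toFun := fun j => (hex j).choose
        map_add' := by
          intro j k
          refine (mul_cancel_left_mem_nonZeroDivisors hy).mp ?_
          rw [(hex (j + k)).choose_spec, mul_add, (hex j).choose_spec, (hex k).choose_spec]
          push_cast
          ring
        map_smul' := by
          intro r j
          refine (mul_cancel_left_mem_nonZeroDivisors hy).mp ?_
          rw [RingHom.id_apply, smul_eq_mul, (hex (r • j)).choose_spec]
          have : y * (r * (hex j).choose) = r * (y * (hex j).choose) := by ring
          rw [this, (hex j).choose_spec]
          push_cast
          rw [smul_eq_mul]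
          ring }
    have hval : a * j = y * f ⟨j, hj⟩ := ((hex ⟨j, hj⟩).choose_spec).symm
    rw [hval]
    refine Ideal.mul_mem_mul (Ideal.mem_span_singleton_self y) ?_
    exact le_iSup (fun f : J →ₗ[R] R => LinearMap.range f) f ⟨⟨j, hj⟩, rfl⟩

end Aux

/-- Let `(R,m)` be a one-dimensional Cohen–Macaulay local ring of minimal
multiplicity (so `m² = xm` for some nonzerodivisor `x`) and `J` a regular
ideal with principal reduction `(y)`.  Then `(y):J ⊇ m` iff `tr(J) ⊇ m`. -/
theorem colon_supset_iff_trace_supset (R : Type*) [CommRing R] [IsLocalRing R]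
    [IsNoetherianRing R]
    (hdim : ringKrullDim R = 1)
    (hmin : ∃ x ∈ maximalIdeal R, x ∈ R⁰ ∧
      (maximalIdeal R) ^ 2 = Ideal.span {x} * maximalIdeal R)
    (J : Ideal R) (hreg : ∃ x ∈ J, x ∈ R⁰)
    (y : R) (hyJ : y ∈ J) (hy : y ∈ R⁰)
    (hred : ∃ n : ℕ, Ideal.span {y} * J ^ n = J ^ (n + 1)) :
    maximalIdeal R ≤ (Ideal.span {y}).colon J ↔ maximalIdeal R ≤ traceIdeal R J := by
  obtain ⟨x, hxm, hx, hxsq⟩ := hmin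
  obtain ⟨n, hn⟩ := hred
  have hA := span_mul_traceIdeal J y hyJ hy
  set I := (Ideal.span {y}).colon J with hIdef
  set m := maximalIdeal R with hmdef
  constructor
  · intro h a ha
    have hay : y * a ∈ Ideal.span {y} * traceIdeal R J := by
      rw [hA, mul_comm y a]
      exact Ideal.mul_mem_mul (h ha) hyJ
    obtain ⟨t, htT, hyt⟩ := Ideal.mem_span_singleton_mul.mp hay
    have : t = a := (mul_cancel_left_mem_nonZeroDivisors hy).mp hyt
    rwa [← this]
  · intro hT
    rcases eq_or_ne (traceIdeal R J) ⊤ with htop | hne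
    · -- trace is the whole ring : then J is principal and I = ⊤
      rw [htop, Ideal.mul_top] at hA
      have hJn : J ^ (n + 1) = I * J ^ (n + 1) :=
        calc J ^ (n + 1) = Ideal.span {y} * J ^ n := hn.symm
          _ = (I * J) * J ^ n := by rw [hA]
          _ = I * J ^ (n + 1) := by rw [mul_assoc, ← pow_succ']
      by_cases hIt : I = ⊤
      · rw [hIt]; exact le_top
      · exfalso
        have hle : I ≤ m := le_maximalIdeal hIt
        have hbot : J ^ (n + 1) = ⊥ := by
          refine Submodule.eq_bot_of_le_smul_of_le_jacobson_bot m _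
            (IsNoetherian.noetherian _) ?_ ?_
          · rw [Ideal.smul_eq_mul]
            calc J ^ (n + 1) = I * J ^ (n + 1) := hJn
              _ ≤ m * J ^ (n + 1) := Ideal.mul_mono_left hle
          · rw [IsLocalRing.jacobson_eq_maximalIdeal ⊥ bot_ne_top]
        have hymem : y ^ (n + 1) ∈ J ^ (n + 1) := Ideal.pow_mem_pow hyJ _
        rw [hbot, Ideal.mem_bot] at hymem
        exact nonZeroDivisors.ne_zero (pow_mem hy (n + 1)) hymem
    · -- trace equals the maximal ideal
      have hTm : traceIdeal R J = m := le_antisymm (le_maximalIdeal hne) hT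
      rw [hTm] at hA
      -- hA : span{y} * m = I * J
      rcases Nat.eq_zero_or_pos n with rfl | hpos
      · -- n = 0 : J = (y), so I = ⊤
        rw [pow_zero, mul_one, pow_one] at hn
        intro a ha
        rw [hIdef, Submodule.mem_colon]
        intro j hj
        rw [← hn] at hj
        rw [smul_eq_mul]
        exact Ideal.mul_mem_left _ a hj
      · obtain ⟨k, rfl⟩ : ∃ k, n = k + 1 := ⟨n - 1, by omega⟩
        have hmpow : ∀ l : ℕ, m ^ (l + 1) = Ideal.span {x} ^ l * m := by
          intro l
          induction l with
          | zero => rw [pow_zero, one_mul, pow_one]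
          | succ l ih =>
            calc m ^ (l + 2) = m ^ (l + 1) * m := pow_succ _ _
              _ = Ideal.span {x} ^ l * m * m := by rw [ih]
              _ = Ideal.span {x} ^ l * m ^ 2 := by ring
              _ = Ideal.span {x} ^ l * (Ideal.span {x} * m) := by rw [hxsq]
              _ = Ideal.span {x} ^ (l + 1) * m := by ring
        have h1 : Ideal.span {y} ^ (k + 1) * (m ^ (k + 1) * J)
            = Ideal.span {y} ^ (k + 1) * (Ideal.span {y} * m ^ (k + 1)) := by
          calc Ideal.span {y} ^ (k + 1) * (m ^ (k + 1) * J)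
              = (Ideal.span {y} * m) ^ (k + 1) * J := by rw [mul_pow]; ring
            _ = (I * J) ^ (k + 1) * J := by rw [hA]
            _ = I ^ (k + 1) * (Ideal.span {y} * J ^ (k + 1)) := by
                rw [hn, mul_pow, mul_assoc, ← pow_succ]
            _ = Ideal.span {y} * (I * J) ^ (k + 1) := by rw [mul_pow]; ring
            _ = Ideal.span {y} * (Ideal.span {y} * m) ^ (k + 1) := by rw [hA]
            _ = Ideal.span {y} ^ (k + 1) * (Ideal.span {y} * m ^ (k + 1)) := by
                rw [mul_pow]; ring
        rw [Ideal.span_singleton_pow] at h1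
        have h2 : m ^ (k + 1) * J = Ideal.span {y} * m ^ (k + 1) :=
          span_singleton_mul_cancel (pow_mem hy (k + 1)) h1
        have h3 : Ideal.span {x} ^ k * (m * J) = Ideal.span {x} ^ k * (Ideal.span {y} * m) := by
          calc Ideal.span {x} ^ k * (m * J) = Ideal.span {x} ^ k * m * J := by ring
            _ = m ^ (k + 1) * J := by rw [← hmpow]
            _ = Ideal.span {y} * m ^ (k + 1) := h2
            _ = Ideal.span {y} * (Ideal.span {x} ^ k * m) := by rw [hmpow]
            _ = Ideal.span {x} ^ k * (Ideal.span {y} * m) := by ring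
        rw [Ideal.span_singleton_pow] at h3
        have h4 : m * J = Ideal.span {y} * m :=
          span_singleton_mul_cancel (pow_mem hx k) h3
        intro a ha
        rw [hIdef, Submodule.mem_colon]
        intro j hj
        rw [smul_eq_mul]
        have : a * j ∈ m * J := Ideal.mul_mem_mul ha hj
        rw [h4] at this
        exact (Ideal.mul_le_left : Ideal.span {y} * m ≤ Ideal.span {y}) this
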